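/- The one-parameter family Φ is the exponential of the locally nilpotent derivation ∂: for every s ∈ K and every a ∈ K[S], if N ∈ ℕ satisfies ∂^{N+1}(a) = 0, then Φ_s(a) = Σ_{n=0}^{N} (s^n / n!) · ∂^n(a). -/

import Mathlib

open AddMonoidAlgebra

/-- The one-parameter family `Φ` is the exponential of the locally nilpotent derivation `∂`:
if `∂^{N+1} a = 0` then `Φ_s a = ∑_{n=0}^{N} (s^n / n!) • ∂^n a`. -/
theorem stmt4 {K M : Type*} [Field K] [CharZero K] [AddCommGroup M]
    [Module.Free ℤ M] [Module.Finite ℤ M]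
    (S : AddSubmonoid M) (ρ : M →+ ℤ) (μ : M)
    (h1 : ∀ l ∈ S, 0 ≤ ρ l) (h2 : ρ μ = -1)
    (h3 : ∀ l ∈ S, 0 < ρ l → l + μ ∈ S)
    (D : Derivation K (AddMonoidAlgebra K S) (AddMonoidAlgebra K S))
    (hD : ∀ l : S,
      (∀ h : 0 < ρ (l : M),
        D (of' K S l) = ((ρ (l : M) : K)) • of' K S (⟨(l : M) + μ, h3 l l.2 h⟩ : S))
      ∧ (ρ (l : M) = 0 → D (of' K S l) = 0))
    -- `σ l n` is the element `λ + nμ` of `S`, for `0 ≤ n ≤ ρ(λ)`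
    (σ : S → ℕ → S)
    (hσ : ∀ (l : S) (n : ℕ), (n : ℤ) ≤ ρ (l : M) → ((σ l n : M) = (l : M) + n • μ))
    (Φ : K → (AddMonoidAlgebra K S →ₗ[K] AddMonoidAlgebra K S))
    (hΦ : ∀ (s : K) (l : S), Φ s (of' K S l) =
      ∑ n ∈ Finset.range ((ρ (l : M)).toNat + 1),
        (((ρ (l : M)).toNat.choose n : K) * s ^ n) • of' K S (σ l n)) :
    ∀ (s : K) (a : AddMonoidAlgebra K S) (N : ℕ),
      (D.toLinearMap ^ (N + 1)) a = 0 →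
      Φ s a = ∑ n ∈ Finset.range (N + 1),
        (s ^ n / (n.factorial : K)) • (D.toLinearMap ^ n) a := by
  intro s a N hNa
  -- ρ is nonneg on S, value on σ l n
  have hρσ : ∀ (l : S) (n : ℕ), (n : ℤ) ≤ ρ (l : M) → ρ ((σ l n : S) : M) = ρ (l : M) - n := by
    intro l n hn
    rw [hσ l n hn, map_add, map_nsmul, h2]
    simp [nsmul_eq_mul]
    ring
  have hσ0 : ∀ l : S, σ l 0 = l := by
    intro l
    ext
    rw [hσ l 0 (by exact_mod_cast h1 l l.2)]
    simp
  -- key formula for D^n on basis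
  have key : ∀ (l : S) (n : ℕ), (n : ℤ) ≤ ρ (l : M) →
      (D.toLinearMap ^ n) (of' K S l)
        = ((ρ (l : M)).toNat.descFactorial n : K) • of' K S (σ l n) := by
    intro l n
    induction n with
    | zero => intro _; simp [hσ0 l]
    | succ n ih =>
      intro hn
      have hn' : (n : ℤ) ≤ ρ (l : M) := by push_cast at hn ⊢; omega
      have hlt : (n : ℤ) < ρ (l : M) := by push_cast at hn; omega
      rw [pow_succ', Module.End.mul_apply, ih hn']
      have hpos : 0 < ρ ((σ l n : S) : M) := by rw [hρσ l n hn']; omega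
      have hDs := (hD (σ l n)).1 hpos
      have hmem : ((σ l n : S) : M) + μ ∈ S := h3 _ (σ l n).2 hpos
      have hσs : (⟨((σ l n : S) : M) + μ, hmem⟩ : S) = σ l (n + 1) := by
        ext
        show ((σ l n : S) : M) + μ = _
        rw [hσ l (n + 1) hn, hσ l n hn', succ_nsmul, add_assoc]
      rw [map_smul]
      change _ • D (of' K S (σ l n)) = _
      rw [hDs, hσs, smul_smul]
      congr 1
      have hle : n ≤ (ρ (l : M)).toNat := by
        have := Int.toNat_of_nonneg (h1 l l.2); omega
      rw [hρσ l n hn', Nat.descFactorial_succ, ← Int.toNat_of_nonneg (h1 l l.2)]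
      push_cast [Int.toNat_natCast, Nat.cast_sub hle]
      ring
  -- vanishing beyond ρ l
  have keyzero : ∀ (l : S) (n : ℕ), ρ (l : M) < (n : ℤ) →
      (D.toLinearMap ^ n) (of' K S l) = 0 := by
    intro l n
    induction n with
    | zero => intro h; exact absurd (h1 l l.2) (by omega)
    | succ n ih =>
      intro hn
      rw [pow_succ', Module.End.mul_apply]
      rcases lt_or_ge (ρ (l : M)) (n : ℤ) with h | h
      · rw [ih h, map_zero]
      · have heq : ρ (l : M) = (n : ℤ) := le_antisymm (by omega) h
        rw [key l n h]
        rw [map_smul]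
        have : ρ ((σ l n : S) : M) = 0 := by rw [hρσ l n h, heq]; ring
        change _ • D (of' K S (σ l n)) = _
        rw [(hD (σ l n)).2 this, smul_zero]
  -- injectivity of l ↦ σ l (N+1) on the relevant set
  -- support bound: every l in support of a has ρ l ≤ N
  have hsupp : ∀ l ∈ a.coeff.support, ρ (l : M) ≤ (N : ℤ) := by
    by_contra hc
    push_neg at hc
    obtain ⟨l0, hl0s, hl0⟩ := hc
    have hle : ((N : ℤ) + 1) ≤ ρ ((l0 : S) : M) := by omega
    have ha : a = ∑ l ∈ a.coeff.support, (a.coeff l) • of' K S l := by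
      conv_lhs => rw [← sum_coeff_single a]
      rw [Finsupp.sum]
      refine Finset.sum_congr rfl fun l _ => ?_
      rw [of'_apply, smul_single', mul_one]
    have hz := hNa
    rw [ha, map_sum] at hz
    have hz2 := congrArg (fun f : AddMonoidAlgebra K S => f.coeff (σ l0 (N + 1))) hz
    simp only [coeff_zero, Finsupp.coe_zero, Pi.zero_apply] at hz2
    rw [coeff_sum, Finsupp.finset_sum_apply] at hz2
    rw [Finset.sum_eq_single l0] at hz2
    · rw [map_smul, key l0 (N + 1) (by exact_mod_cast hle)] at hz2
      rw [of'_apply, smul_single', smul_single', mul_one] at hz2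
      rw [coeff_single, Finsupp.single_eq_same] at hz2
      have hne : ((ρ ((l0 : S) : M)).toNat.descFactorial (N + 1) : K) ≠ 0 := by
        have hd : (ρ ((l0 : S) : M)).toNat.descFactorial (N + 1) ≠ 0 := by
          rw [Ne, Nat.descFactorial_eq_zero_iff_lt, not_lt]
          have := Int.toNat_of_nonneg (h1 l0 l0.2); omega
        exact Nat.cast_ne_zero.mpr hd
      rcases mul_eq_zero.mp hz2 with h | h
      · exact Finsupp.mem_support_iff.mp hl0s h
      · exact hne h
    · intro l hls hne
      rcases lt_or_ge (ρ ((l : S) : M)) ((N : ℤ) + 1) with h | h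
      · rw [map_smul, keyzero l (N + 1) (by exact_mod_cast h), smul_zero]
        rfl
      · rw [map_smul, key l (N + 1) (by exact_mod_cast h)]
        have hne2 : σ l (N + 1) ≠ σ l0 (N + 1) := by
          intro hcon
          apply hne
          have hMeq : ((σ l (N + 1) : S) : M) = ((σ l0 (N + 1) : S) : M) := by rw [hcon]
          rw [hσ l (N + 1) (by exact_mod_cast h), hσ l0 (N + 1) (by exact_mod_cast hle)] at hMeq
          exact Subtype.ext (add_right_cancel hMeq)
        rw [of'_apply, smul_single', smul_single', coeff_single]
        exact Finsupp.single_eq_of_ne' hne2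
    · intro h; exact absurd hl0s h
  -- per-basis-element identity for ρ l ≤ N
  have perl : ∀ l : S, ρ ((l : S) : M) ≤ (N : ℤ) →
      Φ s (of' K S l) = ∑ n ∈ Finset.range (N + 1),
        (s ^ n / (n.factorial : K)) • (D.toLinearMap ^ n) (of' K S l) := by
    intro l hl
    have htn : (ρ ((l : S) : M)).toNat ≤ N := by
      have := Int.toNat_of_nonneg (h1 l l.2); omega
    rw [hΦ s l]
    rw [← Finset.sum_subset (Finset.range_subset_range.mpr (by omega :
        (ρ ((l : S) : M)).toNat + 1 ≤ N + 1))]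
    · refine Finset.sum_congr rfl fun n hn => ?_
      rw [Finset.mem_range] at hn
      have hn' : (n : ℤ) ≤ ρ ((l : S) : M) := by
        have := Int.toNat_of_nonneg (h1 l l.2); omega
      rw [key l n hn', smul_smul]
      congr 1
      rw [Nat.descFactorial_eq_factorial_mul_choose]
      have : ((n.factorial : K)) ≠ 0 := Nat.cast_ne_zero.mpr n.factorial_ne_zero
      field_simp
      push_cast
      ring
    · intro n hn hn'
      rw [Finset.mem_range] at hn
      rw [Finset.mem_range, not_lt] at hn'
      rw [keyzero l n (by
        have := Int.toNat_of_nonneg (h1 l l.2); push_cast; omega), smul_zero]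
  -- assemble by linearity
  have ha : a = ∑ l ∈ a.coeff.support, (a.coeff l) • of' K S l := by
    conv_lhs => rw [← sum_coeff_single a]
    rw [Finsupp.sum]
    refine Finset.sum_congr rfl fun l _ => ?_
    rw [of'_apply, smul_single', mul_one]
  have hDn : ∀ n : ℕ, (D.toLinearMap ^ n) a
      = ∑ l ∈ a.coeff.support, a.coeff l • (D.toLinearMap ^ n) (of' K S l) := by
    intro n
    conv_lhs => rw [ha]
    rw [map_sum]
    exact Finset.sum_congr rfl fun l _ => map_smul _ _ _
  conv_lhs => rw [ha]
  rw [map_sum]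
  simp only [hDn, Finset.smul_sum]
  rw [Finset.sum_comm]
  refine Finset.sum_congr rfl fun l hls => ?_
  rw [map_smul, perl l (hsupp l hls), Finset.smul_sum]
  refine Finset.sum_congr rfl fun n _ => ?_
  rw [smul_comm]
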